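/- Let (W,S) be a Coxeter system, v, w, x ∈ W with v ≤ w in Bruhat order. Then there exists x' ≤ x such that xv ≤ x'·w with ℓ(x' w) = ℓ(x') + ℓ(w). -/

import Mathlib

namespace CoxeterPaper

open CoxeterSystem

variable {B : Type*} {W : Type*} [Group W] {M : CoxeterMatrix B}

/-- The Bruhat order on a Coxeter group: the reflexive-transitive closure of the
relation `a < a * t` for `t` a reflection with length increasing. -/
def BruhatLE (cs : CoxeterSystem M W) (x y : W) : Prop :=
  Relation.ReflTransGen
    (fun a b => (∃ t, cs.IsReflection t ∧ b = a * t) ∧ cs.length a < cs.length b) x y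

/-- One step of the Demazure product with a simple reflection. -/
noncomputable def demStep (cs : CoxeterSystem M W) (x : W) (i : B) : W :=
  if cs.length x < cs.length (x * cs.simple i) then x * cs.simple i else x

/-- The Demazure product of `x` with the word `l`. -/
noncomputable def demWord (cs : CoxeterSystem M W) (x : W) (l : List B) : W :=
  l.foldl (demStep cs) x

/-- The Demazure product (Coxeter monoid product) of two elements: fold the
Demazure action of a reduced word of `y` onto `x`. -/
noncomputable def dem (cs : CoxeterSystem M W) (x y : W) : W :=
  demWord cs x (Classical.choose (cs.exists_reduced_word y))

/-- The standard parabolic subgroup attached to a set of simple indices. -/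
def parabolic (cs : CoxeterSystem M W) (I : Set B) : Subgroup W :=
  Subgroup.closure (cs.simple '' I)

/-- `I` is finitary if the parabolic subgroup `W_I` is finite. -/
def Finitary (cs : CoxeterSystem M W) (I : Set B) : Prop :=
  (parabolic cs I : Set W).Finite

/-- The double coset `W_I w W_J` as a subset of `W`. -/
def doset (cs : CoxeterSystem M W) (I J : Set B) (w : W) : Set W :=
  {x | ∃ a ∈ parabolic cs I, ∃ b ∈ parabolic cs J, x = a * w * b}

/-- `p` is an `(I,J)`-double coset. -/
def IsDCoset (cs : CoxeterSystem M W) (I J : Set B) (p : Set W) : Prop :=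
  ∃ w, p = doset cs I J w

/-- `m` is the Bruhat-minimal element of `p`. -/
def IsMinOf (cs : CoxeterSystem M W) (p : Set W) (m : W) : Prop :=
  m ∈ p ∧ ∀ x ∈ p, BruhatLE cs m x

/-- `m` is the Bruhat-maximal element of `p`. -/
def IsMaxOf (cs : CoxeterSystem M W) (p : Set W) (m : W) : Prop :=
  m ∈ p ∧ ∀ x ∈ p, BruhatLE cs x m

/-- `[I 0, …, I d]` is a singlestep expression. -/
def IsSinglestep (I : ℕ → Set B) (d : ℕ) : Prop :=
  ∀ k < d, (∃ s, s ∉ I k ∧ I (k + 1) = insert s (I k)) ∨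
    (∃ s, s ∈ I k ∧ I (k + 1) = I k \ {s})

/-- `p` is a path subordinate to the singlestep expression `[I 0, …, I d]`. -/
def IsSubPath (cs : CoxeterSystem M W) (I : ℕ → Set B) (d : ℕ) (p : ℕ → Set W) : Prop :=
  p 0 = doset cs (I 0) (I 0) 1 ∧
  (∀ i ≤ d, IsDCoset cs (I 0) (I i) (p i)) ∧
  ∀ k < d, (I k ⊆ I (k + 1) → p k ⊆ p (k + 1)) ∧ (I (k + 1) ⊆ I k → p (k + 1) ⊆ p k)

/-- The Demazure product `w_{I_0} * w_{I_1} * ⋯ * w_{I_d}` of the longest elements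
`wI 0, …, wI d`. -/
noncomputable def exprMax (cs : CoxeterSystem M W) (wI : ℕ → W) (d : ℕ) : W :=
  ((List.range d).map fun k => wI (k + 1)).foldl (dem cs) (wI 0)

open List

section SignRep

open scoped Classical

variable (cs : CoxeterSystem M W)

/-- The sign-flip function attached to a simple reflection. -/
noncomputable def flipFun (i : B) : W × ℤˣ → W × ℤˣ :=
  fun p => (cs.simple i * p.1 * cs.simple i, if p.1 = cs.simple i then -p.2 else p.2)

lemma flip_cond (i : B) (x : W) :
    cs.simple i * x * cs.simple i = cs.simple i ↔ x = cs.simple i := by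
  constructor
  · intro h
    have := congrArg (fun z => cs.simple i * z * cs.simple i) h
    simpa [mul_assoc, cs.simple_mul_simple_cancel_left, cs.simple_mul_simple_self,
      cs.simple_mul_simple_cancel_right] using this
  · rintro rfl
    simp [cs.simple_mul_simple_self]

lemma flipFun_involutive (i : B) : Function.Involutive (flipFun cs i) := by
  rintro ⟨x, ε⟩
  simp only [flipFun, flip_cond]
  refine Prod.ext ?_ ?_
  · show cs.simple i * (cs.simple i * x * cs.simple i) * cs.simple i = x
    rw [← mul_assoc, ← mul_assoc, cs.simple_mul_simple_self, one_mul,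
      mul_assoc, cs.simple_mul_simple_self, mul_one]
  · show (if x = cs.simple i then -if x = cs.simple i then -ε else ε else if x = cs.simple i then -ε else ε) = ε
    split_ifs <;> simp

/-- The sign-flip permutation attached to a simple reflection. -/
noncomputable def flipPerm (i : B) : Equiv.Perm (W × ℤˣ) :=
  Function.Involutive.toPerm _ (flipFun_involutive cs i)

@[simp] lemma flipPerm_apply (i : B) (p : W × ℤˣ) : flipPerm cs i p = flipFun cs i p := rfl


-- dihedral identities
lemma conj_eq_iff {G : Type*} [Group G] {a x b : G} :
    a * x * a⁻¹ = b ↔ x = a⁻¹ * b * a := by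
  constructor
  · intro h; rw [← h]; group
  · intro h; rw [h]; group

lemma simple_comm_pow (i j : B) (k : ℕ) :
    cs.simple j * (cs.simple i * cs.simple j) ^ k =
      ((cs.simple i * cs.simple j) ^ k)⁻¹ * cs.simple j := by
  induction k with
  | zero => simp
  | succ k ih =>
    have h1 : cs.simple j * (cs.simple i * cs.simple j) =
        (cs.simple i * cs.simple j)⁻¹ * cs.simple j := by
      rw [mul_inv_rev, cs.inv_simple, cs.inv_simple, ← mul_assoc]
    rw [pow_succ', ← mul_assoc, h1, mul_assoc, ih, ← mul_assoc, mul_left_inj,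
      ← mul_inv_rev, ← pow_succ, ← pow_succ']

lemma aux_eq1 (i j : B) (k : ℕ) :
    ((cs.simple i * cs.simple j) ^ k)⁻¹ * cs.simple j * (cs.simple i * cs.simple j) ^ k =
      ((cs.simple i * cs.simple j) ^ (2 * k))⁻¹ * cs.simple j := by
  rw [mul_assoc, simple_comm_pow, ← mul_assoc, two_mul, pow_add, mul_inv_rev]

lemma aux_eq2 (i j : B) (k : ℕ) :
    ((cs.simple i * cs.simple j) ^ k)⁻¹ * (cs.simple j * cs.simple i * cs.simple j) *
        (cs.simple i * cs.simple j) ^ k =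
      ((cs.simple i * cs.simple j) ^ (2 * k + 1))⁻¹ * cs.simple j := by
  have h1 : cs.simple j * cs.simple i * cs.simple j =
      (cs.simple i * cs.simple j)⁻¹ * cs.simple j := by
    rw [mul_inv_rev, cs.inv_simple, cs.inv_simple, mul_assoc]
  rw [h1, ← mul_assoc, mul_assoc _ (cs.simple j) _, simple_comm_pow, ← mul_assoc,
    mul_left_inj, ← mul_inv_rev, ← mul_inv_rev, ← pow_succ', ← pow_add,
    show k + (k + 1) = 2 * k + 1 from by omega]

lemma flip_mul_pow (i j : B) (k : ℕ) (x : W) (ε : ℤˣ) :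
    ((flipPerm cs i * flipPerm cs j) ^ k) (x, ε) =
      ((cs.simple i * cs.simple j) ^ k * x * ((cs.simple i * cs.simple j) ^ k)⁻¹,
        (∏ n ∈ Finset.range (2 * k),
          if (cs.simple i * cs.simple j) ^ n * x = cs.simple j then (-1 : ℤˣ) else 1) * ε) := by
  induction k with
  | zero => simp
  | succ k ih =>
    rw [pow_succ', Equiv.Perm.mul_apply, ih, Equiv.Perm.mul_apply, flipPerm_apply,
      flipPerm_apply]
    simp only [flipFun]
    have hc1 : ((cs.simple i * cs.simple j) ^ k * x * (((cs.simple i * cs.simple j)) ^ k)⁻¹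
        = cs.simple j) ↔ ((cs.simple i * cs.simple j) ^ (2 * k) * x = cs.simple j) := by
      rw [conj_eq_iff, aux_eq1, eq_inv_mul_iff_mul_eq]
    have hc2 : (cs.simple j * ((cs.simple i * cs.simple j) ^ k * x *
          (((cs.simple i * cs.simple j)) ^ k)⁻¹) * cs.simple j = cs.simple i) ↔
        ((cs.simple i * cs.simple j) ^ (2 * k + 1) * x = cs.simple j) := by
      rw [show cs.simple j * ((cs.simple i * cs.simple j) ^ k * x *
            (((cs.simple i * cs.simple j)) ^ k)⁻¹) * cs.simple j
          = cs.simple j * ((cs.simple i * cs.simple j) ^ k * x *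
            (((cs.simple i * cs.simple j)) ^ k)⁻¹) * (cs.simple j)⁻¹ from by
            rw [cs.inv_simple]]
      rw [conj_eq_iff, cs.inv_simple, conj_eq_iff,
        show cs.simple j * cs.simple i * cs.simple j =
          (cs.simple j * cs.simple i) * cs.simple j from rfl, ← mul_assoc]
      rw [show ((cs.simple i * cs.simple j) ^ k)⁻¹ * (cs.simple j * cs.simple i) * cs.simple j
          = ((cs.simple i * cs.simple j) ^ k)⁻¹ *
            (cs.simple j * cs.simple i * cs.simple j) from by group]
      rw [aux_eq2, eq_inv_mul_iff_mul_eq]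
    refine Prod.ext ?_ ?_
    · show cs.simple i * (cs.simple j * ((cs.simple i * cs.simple j) ^ k * x *
          ((cs.simple i * cs.simple j) ^ k)⁻¹) * cs.simple j) * cs.simple i
        = (cs.simple i * cs.simple j) ^ (k + 1) * x * ((cs.simple i * cs.simple j) ^ (k + 1))⁻¹
      rw [pow_succ']
      simp only [mul_inv_rev, cs.inv_simple, mul_assoc]
    · show (if cs.simple j * ((cs.simple i * cs.simple j) ^ k * x *
            ((cs.simple i * cs.simple j) ^ k)⁻¹) * cs.simple j = cs.simple i then
          -(if (cs.simple i * cs.simple j) ^ k * x * ((cs.simple i * cs.simple j) ^ k)⁻¹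
              = cs.simple j then
            -((∏ n ∈ Finset.range (2 * k),
              if (cs.simple i * cs.simple j) ^ n * x = cs.simple j then (-1 : ℤˣ) else 1) * ε)
            else (∏ n ∈ Finset.range (2 * k),
              if (cs.simple i * cs.simple j) ^ n * x = cs.simple j then (-1 : ℤˣ) else 1) * ε)
          else (if (cs.simple i * cs.simple j) ^ k * x * ((cs.simple i * cs.simple j) ^ k)⁻¹
              = cs.simple j then
            -((∏ n ∈ Finset.range (2 * k),
              if (cs.simple i * cs.simple j) ^ n * x = cs.simple j then (-1 : ℤˣ) else 1) * ε)
            else (∏ n ∈ Finset.range (2 * k),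
              if (cs.simple i * cs.simple j) ^ n * x = cs.simple j then (-1 : ℤˣ) else 1) * ε)) =
        (∏ n ∈ Finset.range (2 * (k + 1)),
          if (cs.simple i * cs.simple j) ^ n * x = cs.simple j then (-1 : ℤˣ) else 1) * ε
      rw [if_congr hc1 rfl rfl, if_congr hc2 rfl rfl,
        show 2 * (k + 1) = 2 * k + 1 + 1 from by ring,
        Finset.prod_range_succ, Finset.prod_range_succ]
      generalize (∏ n ∈ Finset.range (2 * k),
        if (cs.simple i * cs.simple j) ^ n * x = cs.simple j then (-1 : ℤˣ) else 1) = S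
      split_ifs <;> simp [mul_neg, neg_mul, neg_neg, mul_comm, mul_left_comm, mul_assoc]

lemma flip_liftable : M.IsLiftable (flipPerm cs) := by
  intro i j
  apply Equiv.ext
  rintro ⟨x, ε⟩
  rw [flip_mul_pow, cs.simple_mul_simple_pow i j]
  refine Prod.ext ?_ ?_
  · simp
  · show (∏ n ∈ Finset.range (2 * M.M i j),
        if (cs.simple i * cs.simple j) ^ n * x = cs.simple j then (-1 : ℤˣ) else 1) * ε = ε
    rw [two_mul, Finset.prod_range_add]
    have : ∀ n, (cs.simple i * cs.simple j) ^ (M.M i j + n) = (cs.simple i * cs.simple j) ^ n := by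
      intro n
      rw [pow_add, cs.simple_mul_simple_pow i j, one_mul]
    have hcong : (∏ n ∈ Finset.range (M.M i j),
          if (cs.simple i * cs.simple j) ^ (M.M i j + n) * x = cs.simple j then (-1 : ℤˣ) else 1)
        = (∏ n ∈ Finset.range (M.M i j),
          if (cs.simple i * cs.simple j) ^ n * x = cs.simple j then (-1 : ℤˣ) else 1) :=
      Finset.prod_congr rfl (fun n _ => by rw [this n])
    rw [hcong]
    rw [← sq]
    have h2 : ∀ u : ℤˣ, u ^ 2 = 1 := fun u => Int.units_sq u
    rw [h2, one_mul]

/-- The sign representation on `W × ℤˣ`. -/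
noncomputable def pr : W →* Equiv.Perm (W × ℤˣ) :=
  cs.lift ⟨flipPerm cs, flip_liftable cs⟩

@[simp] lemma pr_simple (i : B) : pr cs (cs.simple i) = flipPerm cs i :=
  cs.lift_apply_simple (flip_liftable cs) i

/-- The sign of `x` with respect to a list of elements of `W`. -/
noncomputable def signList (x : W) (l : List W) : ℤˣ :=
  (l.map (fun t => if t = x then (-1 : ℤˣ) else 1)).prod

@[simp] lemma signList_nil (x : W) : signList x [] = 1 := rfl

lemma signList_cons (x : W) (a : W) (l : List W) :
    signList x (a :: l) = (if a = x then (-1 : ℤˣ) else 1) * signList x l := by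
  simp [signList]

lemma signList_eq_one_of_not_mem {x : W} {l : List W} (h : x ∉ l) : signList x l = 1 := by
  induction l with
  | nil => rfl
  | cons a l ih =>
    rw [signList_cons]
    rw [if_neg (by rintro rfl; exact h List.mem_cons_self),
      ih (fun hm => h (List.mem_cons_of_mem _ hm)), one_mul]

lemma pr_wordProd (ω : List B) (x : W) (ε : ℤˣ) :
    pr cs (cs.wordProd ω) (x, ε) =
      (cs.wordProd ω * x * (cs.wordProd ω)⁻¹, signList x (cs.rightInvSeq ω) * ε) := by
  induction ω with
  | nil => simp
  | cons i ω ih =>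
    rw [cs.wordProd_cons, map_mul, Equiv.Perm.mul_apply, ih, pr_simple, flipPerm_apply]
    simp only [flipFun]
    have hris : cs.rightInvSeq (i :: ω)
        = ((cs.wordProd ω)⁻¹ * cs.simple i * cs.wordProd ω) :: cs.rightInvSeq ω := rfl
    rw [hris, signList_cons]
    have hcond : (cs.wordProd ω * x * (cs.wordProd ω)⁻¹ = cs.simple i) ↔
        ((cs.wordProd ω)⁻¹ * cs.simple i * cs.wordProd ω = x) := by
      rw [conj_eq_iff, eq_comm]
    refine Prod.ext ?_ ?_
    · show cs.simple i * (cs.wordProd ω * x * (cs.wordProd ω)⁻¹) * cs.simple i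
        = cs.simple i * cs.wordProd ω * x * (cs.simple i * cs.wordProd ω)⁻¹
      rw [mul_inv_rev, cs.inv_simple]
      simp only [mul_assoc]
    · show (if cs.wordProd ω * x * (cs.wordProd ω)⁻¹ = cs.simple i then
          -(signList x (cs.rightInvSeq ω) * ε) else signList x (cs.rightInvSeq ω) * ε)
        = (if (cs.wordProd ω)⁻¹ * cs.simple i * cs.wordProd ω = x then (-1 : ℤˣ) else 1) *
          signList x (cs.rightInvSeq ω) * ε
      rw [if_congr hcond rfl rfl]
      split_ifs <;> simp [mul_assoc]

lemma pr_fst (u x : W) (ε : ℤˣ) : (pr cs u (x, ε)).1 = u * x * u⁻¹ := by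
  obtain ⟨ω, rfl⟩ := cs.wordProd_surjective u
  rw [pr_wordProd]

lemma pr_snd (u x : W) (ε : ℤˣ) : (pr cs u (x, ε)).2 = (pr cs u (x, 1)).2 * ε := by
  obtain ⟨ω, rfl⟩ := cs.wordProd_surjective u
  rw [pr_wordProd, pr_wordProd]
  simp

lemma pr_pair (u x : W) (ε : ℤˣ) : pr cs u (x, ε) = (u * x * u⁻¹, (pr cs u (x, 1)).2 * ε) := by
  refine Prod.ext ?_ ?_
  · exact pr_fst cs u x ε
  · exact pr_snd cs u x ε

lemma pr_reflection {t : W} (ht : cs.IsReflection t) (ε : ℤˣ) :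
    pr cs t (t, ε) = (t, -ε) := by
  obtain ⟨u, i, rfl⟩ := ht
  set t := u * cs.simple i * u⁻¹ with htdef
  have h1 : pr cs u⁻¹ (t, ε) = (cs.simple i, (pr cs u⁻¹ (t, 1)).2 * ε) := by
    rw [pr_pair]
    congr 1
    rw [htdef]
    group
  set δ := (pr cs u⁻¹ (t, 1)).2 * ε with hδ
  have h2 : pr cs (cs.simple i) (cs.simple i, δ) = (cs.simple i, -δ) := by
    rw [pr_simple, flipPerm_apply]
    simp [flipFun, cs.simple_mul_simple_self, cs.simple_mul_simple_cancel_right]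
  have hc : ∀ ε' : ℤˣ, pr cs u (cs.simple i, ε') = (t, (pr cs u (cs.simple i, 1)).2 * ε') := by
    intro ε'
    rw [pr_pair]
  have hid : pr cs u (pr cs u⁻¹ (t, ε)) = (t, ε) := by
    rw [← Equiv.Perm.mul_apply, ← map_mul, mul_inv_cancel, map_one, Equiv.Perm.one_apply]
  rw [h1, hc] at hid
  have hkey : (pr cs u (cs.simple i, 1)).2 * δ = ε := congrArg Prod.snd hid
  have : pr cs t (t, ε) = pr cs u (pr cs (cs.simple i) (pr cs u⁻¹ (t, ε))) := by
    rw [← Equiv.Perm.mul_apply, ← Equiv.Perm.mul_apply, ← map_mul, ← map_mul, htdef]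
  rw [this, h1, h2, hc]
  refine Prod.ext rfl ?_
  show (pr cs u (cs.simple i, 1)).2 * -δ = -ε
  rw [mul_neg, hkey]

/-- Strong exchange property. -/
lemma strong_exchange {ω : List B} (hred : cs.IsReduced ω) {t : W} (ht : cs.IsReflection t)
    (hl : cs.length (cs.wordProd ω * t) < cs.length (cs.wordProd ω)) :
    t ∈ cs.rightInvSeq ω := by
  by_contra hmem
  obtain ⟨α, hα, hwt⟩ := cs.exists_reduced_word' (cs.wordProd ω * t)
  have htα : t ∉ cs.rightInvSeq α := by
    intro hm
    have h2 := (cs.isRightInversion_of_mem_rightInvSeq hα hm).2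
    rw [← hwt, mul_assoc, ht.mul_self, mul_one] at h2
    omega
  have e1 : (pr cs (cs.wordProd ω) (t, 1)).2 = 1 := by
    rw [pr_wordProd, signList_eq_one_of_not_mem hmem, one_mul]
  have e2 : (pr cs (cs.wordProd ω) (t, 1)).2 = -1 := by
    have hw : cs.wordProd ω = (cs.wordProd ω * t) * t := by
      rw [mul_assoc, ht.mul_self, mul_one]
    rw [hw, map_mul, Equiv.Perm.mul_apply, pr_reflection cs ht, hwt, pr_wordProd,
      signList_eq_one_of_not_mem htα, one_mul]
  rw [e1] at e2
  exact absurd e2 (by decide)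

/-- Strong exchange, in the deletion form. -/
lemma strong_exchange' {ω : List B} (hred : cs.IsReduced ω) {t : W} (ht : cs.IsReflection t)
    (hl : cs.length (cs.wordProd ω * t) < cs.length (cs.wordProd ω)) :
    ∃ j < ω.length, cs.wordProd (ω.eraseIdx j) = cs.wordProd ω * t := by
  have hmem := strong_exchange cs hred ht hl
  obtain ⟨j, hj, hjt⟩ := List.mem_iff_getElem.mp hmem
  rw [cs.length_rightInvSeq] at hj
  refine ⟨j, hj, ?_⟩
  have := cs.wordProd_mul_getD_rightInvSeq ω j
  rw [List.getD_eq_getElem _ _ (by rwa [cs.length_rightInvSeq])] at this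
  rw [← this, hjt]

end SignRep

section Bruhat

variable (cs : CoxeterSystem M W)

lemma BruhatLE.refl (x : W) : BruhatLE cs x x := Relation.ReflTransGen.refl

lemma BruhatLE.trans {x y z : W} (h1 : BruhatLE cs x y) (h2 : BruhatLE cs y z) :
    BruhatLE cs x z := Relation.ReflTransGen.trans h1 h2

lemma bruhat_step {u t : W} (ht : cs.IsReflection t)
    (h : cs.length u < cs.length (u * t)) : BruhatLE cs u (u * t) :=
  Relation.ReflTransGen.single ⟨⟨t, ht, rfl⟩, h⟩

lemma bruhat_step_down {u t : W} (ht : cs.IsReflection t)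
    (h : cs.length (u * t) < cs.length u) : BruhatLE cs (u * t) u := by
  refine Relation.ReflTransGen.single ⟨⟨t, ht, ?_⟩, h⟩
  rw [mul_assoc, ht.mul_self, mul_one]

lemma bruhat_step_left {u t : W} (ht : cs.IsReflection t)
    (h : cs.length u < cs.length (t * u)) : BruhatLE cs u (t * u) := by
  refine Relation.ReflTransGen.single ⟨⟨u⁻¹ * t * u, ?_, by group⟩, h⟩
  have := ht.conj u⁻¹
  rwa [inv_inv] at this

lemma bruhat_step_left_down {u t : W} (ht : cs.IsReflection t)
    (h : cs.length (t * u) < cs.length u) : BruhatLE cs (t * u) u := by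
  refine Relation.ReflTransGen.single ⟨⟨u⁻¹ * t * u, ?_, ?_⟩, h⟩
  · have := ht.conj u⁻¹
    rwa [inv_inv] at this
  · rw [show t * u * (u⁻¹ * t * u) = t * t * u from by group, ht.mul_self, one_mul]

lemma bruhat_inv {u z : W} (h : BruhatLE cs u z) : BruhatLE cs u⁻¹ z⁻¹ := by
  induction h with
  | refl => exact BruhatLE.refl cs _
  | @tail b c hab hstep ih =>
    obtain ⟨⟨t, ht, rfl⟩, hlen⟩ := hstep
    refine BruhatLE.trans cs ih ?_
    have heq : (b * t)⁻¹ = b⁻¹ * (b * t * b⁻¹) := by rw [mul_inv_rev, ht.inv]; group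
    rw [heq]
    refine bruhat_step cs (ht.conj b) ?_
    rw [← heq, cs.length_inv, cs.length_inv]
    exact hlen

/-- One-step version of Deodhar's Property Z: if `z = y * t` covers-ish `y` and
`s = s_i` with `ys > y`, `zs < z`, then `ys ≤ z`. -/
lemma step_Z' (i : B) {y t : W} (ht : cs.IsReflection t)
    (hyz : cs.length y < cs.length (y * t))
    (hys : cs.length y < cs.length (y * cs.simple i))
    (hzs : cs.length (y * t * cs.simple i) < cs.length (y * t)) :
    BruhatLE cs (y * cs.simple i) (y * t) := by
  have hsts : cs.IsReflection (cs.simple i * t * cs.simple i) := by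
    have := ht.conj (cs.simple i)
    rwa [cs.inv_simple] at this
  have hzs_eq : y * t * cs.simple i
      = (y * cs.simple i) * (cs.simple i * t * cs.simple i) := by
    rw [show (y * cs.simple i) * (cs.simple i * t * cs.simple i)
        = y * (cs.simple i * cs.simple i) * t * cs.simple i from by group,
      cs.simple_mul_simple_self, mul_one]
  rcases lt_trichotomy (cs.length (y * cs.simple i)) (cs.length (y * t * cs.simple i)) with
    hlt | heq | hgt
  · -- ys ≤ zs ≤ z
    have h1 : BruhatLE cs (y * cs.simple i) (y * t * cs.simple i) := by
      rw [hzs_eq]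
      refine bruhat_step cs hsts ?_
      rwa [← hzs_eq]
    exact (h1.trans cs (bruhat_step_down cs (cs.isReflection_simple i) hzs))
  · exfalso
    have hne := hsts.length_mul_left_ne (y * cs.simple i)
    rw [← hzs_eq] at hne
    exact hne heq.symm
  · -- impossible except when it degenerates to ys = z
    have hys1 : cs.length (y * cs.simple i) = cs.length y + 1 := by
      rcases cs.length_mul_simple y i with h | h <;> omega
    have hzs1 : cs.length (y * t) = cs.length (y * t * cs.simple i) + 1 := by
      rcases cs.length_mul_simple (y * t) i with h | h <;> omega
    have hly : cs.length (y * t * cs.simple i) = cs.length y := by omega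
    obtain ⟨α, hα, hαeq⟩ := cs.exists_reduced_word' (y * t * cs.simple i)
    have hαlen : α.length = cs.length y := by rw [← hly, hαeq]; exact hα.symm
    set ω := α ++ [i] with hω
    have hπω : cs.wordProd ω = y * t := by
      rw [hω, cs.wordProd_append, cs.wordProd_singleton, ← hαeq,
        cs.simple_mul_simple_cancel_right]
    have hωlen : ω.length = cs.length y + 1 := by
      rw [hω, List.length_append, List.length_singleton, hαlen]
    have hred : cs.IsReduced ω := by
      show cs.length (cs.wordProd ω) = ω.length
      rw [hπω, hωlen]
      omega
    have hπωt : cs.length (cs.wordProd ω * t) < cs.length (cs.wordProd ω) := by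
      rw [hπω, mul_assoc, ht.mul_self, mul_one]
      omega
    obtain ⟨j, hj, hjeq⟩ := strong_exchange' cs hred ht hπωt
    rw [hπω, mul_assoc, ht.mul_self, mul_one] at hjeq
    rw [hω, List.length_append, List.length_singleton] at hj
    rcases lt_or_eq_of_le (Nat.lt_succ_iff.mp hj) with hjlt | hjeq'
    · exfalso
      have herase : ω.eraseIdx j = α.eraseIdx j ++ [i] := by
        rw [hω]
        exact List.eraseIdx_append_of_lt_length hjlt _
      rw [herase, cs.wordProd_append, cs.wordProd_singleton] at hjeq
      have hys_eq : y * cs.simple i = cs.wordProd (α.eraseIdx j) := by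
        rw [← hjeq, cs.simple_mul_simple_cancel_right]
      have hbound : cs.length (y * cs.simple i) ≤ (α.eraseIdx j).length := by
        rw [hys_eq]; exact cs.length_wordProd_le _
      rw [List.length_eraseIdx_of_lt hjlt] at hbound
      omega
    · have herase : ω.eraseIdx j = α := by
        rw [hω, hjeq', List.eraseIdx_append_of_length_le (le_refl _), Nat.sub_self]
        simp
      rw [herase, ← hαeq] at hjeq
      have h5 : y * t = y * cs.simple i := by
        have h6 := congrArg (fun w => w * cs.simple i) hjeq
        simpa only [cs.simple_mul_simple_cancel_right] using h6
      rw [← h5]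
      exact BruhatLE.refl cs _

/-- Deodhar's Property Z for the Bruhat order (right version). -/
lemma property_Z (i : B) {u z : W} (h : BruhatLE cs u z)
    (hu : cs.length u < cs.length (u * cs.simple i)) :
    (cs.length z < cs.length (z * cs.simple i) →
        BruhatLE cs (u * cs.simple i) (z * cs.simple i)) ∧
    (cs.length (z * cs.simple i) < cs.length z → BruhatLE cs (u * cs.simple i) z) := by
  induction h with
  | refl =>
    exact ⟨fun _ => BruhatLE.refl cs _, fun hlt => absurd hu (by omega)⟩
  | @tail b c hab hstep ih =>
    obtain ⟨⟨t, ht, rfl⟩, hlen⟩ := hstep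
    have hsts : cs.IsReflection (cs.simple i * t * cs.simple i) := by
      have := ht.conj (cs.simple i)
      rwa [cs.inv_simple] at this
    have hzs_eq : b * t * cs.simple i
        = (b * cs.simple i) * (cs.simple i * t * cs.simple i) := by
      rw [show (b * cs.simple i) * (cs.simple i * t * cs.simple i)
          = b * (cs.simple i * cs.simple i) * t * cs.simple i from by group,
        cs.simple_mul_simple_self, mul_one]
    constructor
    · intro hzs
      by_cases hbs : cs.length b < cs.length (b * cs.simple i)
      · refine (ih.1 hbs).trans cs ?_
        rw [hzs_eq]
        refine bruhat_step cs hsts ?_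
        rw [← hzs_eq]
        have hbs1 : cs.length (b * cs.simple i) = cs.length b + 1 := by
          rcases cs.length_mul_simple b i with h | h <;> omega
        omega
      · have hbs' : cs.length (b * cs.simple i) < cs.length b := by
          rcases cs.length_mul_simple b i with h | h <;> omega
        refine ((ih.2 hbs').trans cs (bruhat_step cs ht hlen)).trans cs ?_
        exact bruhat_step cs (cs.isReflection_simple i) hzs
    · intro hzs
      by_cases hbs : cs.length b < cs.length (b * cs.simple i)
      · exact (ih.1 hbs).trans cs (step_Z' cs i ht hlen hbs hzs)
      · have hbs' : cs.length (b * cs.simple i) < cs.length b := by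
          rcases cs.length_mul_simple b i with h | h <;> omega
        exact (ih.2 hbs').trans cs (bruhat_step cs ht hlen)

/-- Deodhar's Property Z for the Bruhat order (left version). -/
lemma property_Z_left (i : B) {u z : W} (h : BruhatLE cs u z)
    (hu : cs.length u < cs.length (cs.simple i * u)) :
    (cs.length z < cs.length (cs.simple i * z) →
        BruhatLE cs (cs.simple i * u) (cs.simple i * z)) ∧
    (cs.length (cs.simple i * z) < cs.length z → BruhatLE cs (cs.simple i * u) z) := by
  have einv : ∀ w : W, w⁻¹ * cs.simple i = (cs.simple i * w)⁻¹ := fun w => by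
    rw [mul_inv_rev, cs.inv_simple]
  have hu' : cs.length u⁻¹ < cs.length (u⁻¹ * cs.simple i) := by
    rw [einv, cs.length_inv, cs.length_inv]
    exact hu
  have h' := property_Z cs i (bruhat_inv cs h) hu'
  constructor
  · intro hz
    have hz' : cs.length z⁻¹ < cs.length (z⁻¹ * cs.simple i) := by
      rw [einv, cs.length_inv, cs.length_inv]; exact hz
    have := bruhat_inv cs (h'.1 hz')
    rwa [einv, einv, inv_inv, inv_inv] at this
  · intro hz
    have hz' : cs.length (z⁻¹ * cs.simple i) < cs.length z⁻¹ := by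
      rw [einv, cs.length_inv, cs.length_inv]; exact hz
    have := bruhat_inv cs (h'.2 hz')
    rwa [einv, inv_inv, inv_inv] at this


/-- Lifting: if `v ≤ w` then there is `x' ≤ x` with `x * v ≤ x' * w` and the
product `x' * w` reduced. -/
theorem lifting_left (cs : CoxeterSystem M W) (v w x : W) (h : BruhatLE cs v w) :
    ∃ x', BruhatLE cs x' x ∧ BruhatLE cs (x * v) (x' * w) ∧
      cs.length (x' * w) = cs.length x' + cs.length w := by
  suffices H : ∀ n (x : W), cs.length x = n → ∀ v w : W, BruhatLE cs v w →
      ∃ x', BruhatLE cs x' x ∧ BruhatLE cs (x * v) (x' * w) ∧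
        cs.length (x' * w) = cs.length x' + cs.length w from
    H (cs.length x) x rfl v w h
  intro n
  induction n with
  | zero =>
    intro x hx v w h
    have hx1 : x = 1 := cs.length_eq_zero_iff.mp hx
    subst hx1
    exact ⟨1, BruhatLE.refl cs 1, by simpa using h, by simp⟩
  | succ n ih =>
    intro x hx v w h
    have hx1 : x ≠ 1 := by
      intro h1
      rw [h1, cs.length_one] at hx
      omega
    obtain ⟨i, hi⟩ := cs.exists_leftDescent_of_ne_one hx1
    obtain ⟨y, hxy, hylen⟩ : ∃ y, x = cs.simple i * y ∧ cs.length y = n := by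
      refine ⟨cs.simple i * x, by rw [cs.simple_mul_simple_cancel_left], ?_⟩
      have h1 : cs.length (cs.simple i * x) < cs.length x := hi
      rcases cs.length_simple_mul x i with h2 | h2 <;> omega
    subst hxy
    have hsylen : cs.length y < cs.length (cs.simple i * y) := by omega
    obtain ⟨y', h1, h2, h3⟩ := ih y hylen v w h
    by_cases hA : cs.length (y' * w) < cs.length (cs.simple i * (y' * w))
    · -- Case A : take x' = s i * y'
      have hA1 : cs.length (cs.simple i * (y' * w)) = cs.length (y' * w) + 1 := by
        rcases cs.length_simple_mul (y' * w) i with hc | hc <;> omega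
      have hsy' : cs.length (cs.simple i * y') = cs.length y' + 1 := by
        have hb1 : cs.length (cs.simple i * y' * w) = cs.length y' + cs.length w + 1 := by
          rw [mul_assoc, hA1, h3]
        have hb2 := cs.length_mul_le (cs.simple i * y') w
        rcases cs.length_simple_mul y' i with hc | hc <;> omega
      refine ⟨cs.simple i * y', ?_, ?_, ?_⟩
      · exact (property_Z_left cs i h1 (by omega)).1 hsylen
      · rw [mul_assoc, mul_assoc]
        by_cases hyv : cs.length (y * v) < cs.length (cs.simple i * (y * v))
        · exact (property_Z_left cs i h2 hyv).1 hA
        · have hyv' : cs.length (cs.simple i * (y * v)) < cs.length (y * v) := by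
            rcases cs.length_simple_mul (y * v) i with hc | hc <;>
              [omega; (have := cs.length_simple_mul_ne (y * v) i; omega)]
          refine ((bruhat_step_left_down cs (cs.isReflection_simple i) hyv').trans cs
            h2).trans cs ?_
          exact bruhat_step_left cs (cs.isReflection_simple i) hA
      · rw [mul_assoc, hA1, h3, hsy']
        omega
    · -- Case B : take x' = y'
      have hB : cs.length (cs.simple i * (y' * w)) < cs.length (y' * w) := by
        have hne := cs.length_simple_mul_ne (y' * w) i
        omega
      refine ⟨y', ?_, ?_, h3⟩
      · exact h1.trans cs (bruhat_step_left cs (cs.isReflection_simple i) hsylen)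
      · rw [mul_assoc]
        by_cases hyv : cs.length (y * v) < cs.length (cs.simple i * (y * v))
        · exact (property_Z_left cs i h2 hyv).2 hB
        · have hyv' : cs.length (cs.simple i * (y * v)) < cs.length (y * v) := by
            have := cs.length_simple_mul_ne (y * v) i
            omega
          exact (bruhat_step_left_down cs (cs.isReflection_simple i) hyv').trans cs h2

end Bruhat

end CoxeterPaper
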